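/- There are exactly 35 three-element subsets D of {1,…,9} with the property that no positive integer c and integers y₁, y₂, y₃ satisfy {y₁, y₁+c, y₂, y₂+c, y₃, y₃+c} = {1,…,9} \ D. -/

import Mathlib

set_option maxHeartbeats 800000 in
theorem fubuki_aux (D : Finset ℤ) :
    (∃ (c : ℤ) (y₁ y₂ y₃ : ℤ), 0 < c ∧
        ({y₁, y₁ + c, y₂, y₂ + c, y₃, y₃ + c} : Finset ℤ) = Finset.Icc (1 : ℤ) 9 \ D) ↔
    (∃ c ∈ Finset.Icc (1:ℤ) 8,
      ∃ y₂ ∈ Finset.Icc (1:ℤ) 9 \ D, ∃ y₃ ∈ Finset.Icc (1:ℤ) 9 \ D,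
        y₂ ≤ y₃ ∧
        ({(Finset.Icc (1:ℤ) 9 \ D).min.untopD 0,
          (Finset.Icc (1:ℤ) 9 \ D).min.untopD 0 + c,
          y₂, y₂ + c, y₃, y₃ + c} : Finset ℤ) = Finset.Icc (1 : ℤ) 9 \ D) := by
  set E := Finset.Icc (1:ℤ) 9 \ D with hE
  constructor
  · rintro ⟨c, y₁, y₂, y₃, hc, h⟩
    have hne : E.Nonempty := ⟨y₁, by rw [← h]; simp⟩
    have hm : E.min.untopD 0 = E.min' hne := by
      rw [← Finset.coe_min' hne, WithTop.untopD_coe]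
    rw [hm]
    have hmmem : E.min' hne ∈ E := Finset.min'_mem E hne
    have hmle : ∀ x ∈ E, E.min' hne ≤ x := fun x hx => Finset.min'_le E x hx
    have hsub : E ⊆ Finset.Icc (1:ℤ) 9 := Finset.sdiff_subset
    have h1 : y₁ ∈ E := by rw [← h]; simp
    have h1c : y₁ + c ∈ E := by rw [← h]; simp
    have h2 : y₂ ∈ E := by rw [← h]; simp
    have h2c : y₂ + c ∈ E := by rw [← h]; simp
    have h3 : y₃ ∈ E := by rw [← h]; simp
    have h3c : y₃ + c ∈ E := by rw [← h]; simp
    have hmS : E.min' hne ∈ ({y₁, y₁ + c, y₂, y₂ + c, y₃, y₃ + c} : Finset ℤ) := by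
      rw [h]; exact hmmem
    simp only [Finset.mem_insert, Finset.mem_singleton] at hmS
    have hb1 : (1:ℤ) ≤ E.min' hne := (Finset.mem_Icc.mp (hsub hmmem)).1
    have hcase : E.min' hne = y₁ ∨ E.min' hne = y₂ ∨ E.min' hne = y₃ := by
      rcases hmS with h' | h' | h' | h' | h' | h'
      · exact Or.inl h'
      · exfalso; have := hmle y₁ h1; omega
      · exact Or.inr (Or.inl h')
      · exfalso; have := hmle y₂ h2; omega
      · exact Or.inr (Or.inr h')
      · exfalso; have := hmle y₃ h3; omega
    have hcm : E.min' hne + c ∈ E := by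
      rcases hcase with h' | h' | h' <;> rw [h'] <;> assumption
    have hc8 : c ≤ 8 := by
      have := (Finset.mem_Icc.mp (hsub hcm)).2; omega
    refine ⟨c, Finset.mem_Icc.mpr ⟨by omega, hc8⟩, ?_⟩
    rcases hcase with h' | h' | h'
    · rcases le_total y₂ y₃ with hle | hle
      · exact ⟨y₂, h2, y₃, h3, hle, by { rw [h', ← h]; try { ext x; simp only [Finset.mem_insert, Finset.mem_singleton]; omega } }⟩
      · exact ⟨y₃, h3, y₂, h2, hle, by { rw [h', ← h]; try { ext x; simp only [Finset.mem_insert, Finset.mem_singleton]; omega } }⟩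
    · rcases le_total y₁ y₃ with hle | hle
      · exact ⟨y₁, h1, y₃, h3, hle, by { rw [h', ← h]; try { ext x; simp only [Finset.mem_insert, Finset.mem_singleton]; omega } }⟩
      · exact ⟨y₃, h3, y₁, h1, hle, by { rw [h', ← h]; try { ext x; simp only [Finset.mem_insert, Finset.mem_singleton]; omega } }⟩
    · rcases le_total y₁ y₂ with hle | hle
      · exact ⟨y₁, h1, y₂, h2, hle, by { rw [h', ← h]; try { ext x; simp only [Finset.mem_insert, Finset.mem_singleton]; omega } }⟩
      · exact ⟨y₂, h2, y₁, h1, hle, by { rw [h', ← h]; try { ext x; simp only [Finset.mem_insert, Finset.mem_singleton]; omega } }⟩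
  · rintro ⟨c, hc, y₂, _, y₃, _, _, h⟩
    exact ⟨c, _, y₂, y₃, by have := Finset.mem_Icc.mp hc; omega, h⟩

set_option maxHeartbeats 2000000 in
theorem fubuki_key :
    (((Finset.Icc (1 : ℤ) 9).powersetCard 3).filter
      (fun D => ¬ ∃ c ∈ Finset.Icc (1:ℤ) 8,
        ∃ y₂ ∈ Finset.Icc (1:ℤ) 9 \ D, ∃ y₃ ∈ Finset.Icc (1:ℤ) 9 \ D,
          y₂ ≤ y₃ ∧
          ({((Finset.Icc (1:ℤ) 9 \ D).min.untopD 0),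
            ((Finset.Icc (1:ℤ) 9 \ D).min.untopD 0) + c,
            y₂, y₂ + c, y₃, y₃ + c} : Finset ℤ)
            = Finset.Icc (1 : ℤ) 9 \ D)).card = 35 := by
  decide

open scoped Classical

theorem fubuki_count_no_c :
    (((Finset.Icc (1 : ℤ) 9).powersetCard 3).filter
      (fun D => ¬ ∃ (c : ℤ) (y₁ y₂ y₃ : ℤ), 0 < c ∧
          ({y₁, y₁ + c, y₂, y₂ + c, y₃, y₃ + c} : Finset ℤ)
            = Finset.Icc (1 : ℤ) 9 \ D)).card = 35 := by
  rw [Finset.filter_congr (fun D _ => not_congr (fubuki_aux D))]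
  convert fubuki_key using 2
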